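/- Let n ≥ 7 be odd, and in the alternating group A_n on {1,…,n} let x₁ = (1,2,4) and y₁ = (1,2,3,4,…,n). Then x₁ and y₁ generate A_n, and their product x₁y₁ = (1,3,4,2,5,6,…,n) is an n-cycle. -/

import Mathlib

open Equiv Equiv.Perm List

set_option maxHeartbeats 2000000

section
variable (n : ℕ) [NeZero n] (hn : 7 ≤ n)
include hn

lemma agl_lit0 : (0 : Fin n) = ⟨0, by omega⟩ := by
  ext; have := Fin.val_cast_of_lt (n := n) (a := 0) (by omega); simpa using this
lemma agl_lit1 : (1 : Fin n) = ⟨1, by omega⟩ := by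
  ext; have := Fin.val_cast_of_lt (n := n) (a := 1) (by omega); simpa using this
lemma agl_lit2 : (2 : Fin n) = ⟨2, by omega⟩ := by
  ext; have := Fin.val_cast_of_lt (n := n) (a := 2) (by omega); simpa using this
lemma agl_lit3 : (3 : Fin n) = ⟨3, by omega⟩ := by
  ext; have := Fin.val_cast_of_lt (n := n) (a := 3) (by omega); simpa using this

omit hn in
lemma agl_x_eq : formPerm [(0 : Fin n), 1, 3] = swap 0 1 * swap 1 3 := by
  rw [formPerm_cons_cons, formPerm_cons_cons, formPerm_singleton, mul_one]

lemma agl_x_apply (v : ℕ) (h : v < n) :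
    formPerm [(0 : Fin n), 1, 3] ⟨v, h⟩ =
      ⟨if v = 0 then 1 else if v = 1 then 3 else if v = 3 then 0 else v,
        by split_ifs <;> omega⟩ := by
  rw [agl_x_eq n, agl_lit0 n hn, agl_lit1 n hn, agl_lit3 n hn]
  simp only [mul_apply, swap_apply_def, Fin.mk.injEq]
  split_ifs <;> simp_all <;> omega

lemma agl_tau_apply (v : ℕ) (h : v < n) :
    swap (0 : Fin n) 1 ⟨v, h⟩ =
      ⟨if v = 0 then 1 else if v = 1 then 0 else v, by split_ifs <;> omega⟩ := by
  rw [agl_lit0 n hn, agl_lit1 n hn]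
  simp only [swap_apply_def, Fin.mk.injEq]
  split_ifs <;> simp_all <;> omega

lemma agl_c_apply (v : ℕ) (h : v < n) :
    finRotate n ⟨v, h⟩ = ⟨if v + 1 = n then 0 else v + 1, by split_ifs <;> omega⟩ := by
  obtain ⟨m, rfl⟩ : ∃ m, n = m + 1 := ⟨n - 1, by omega⟩
  rw [finRotate_succ_apply]
  ext
  simp only [Fin.add_def]
  rw [agl_lit1 (m+1) hn]
  simp only []
  split_ifs with h1
  · simp [h1]
  · exact Nat.mod_eq_of_lt (by omega)

lemma agl_cinv_apply (v : ℕ) (h : v < n) :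
    (finRotate n)⁻¹ ⟨v, h⟩ = ⟨if v = 0 then n - 1 else v - 1, by split_ifs <;> omega⟩ := by
  have h2 : finRotate n ⟨if v = 0 then n - 1 else v - 1, by split_ifs <;> omega⟩ = ⟨v, h⟩ := by
    rw [agl_c_apply n hn]
    ext; simp only []
    split_ifs <;> omega
  rw [← h2, Equiv.Perm.inv_def, Equiv.symm_apply_apply]

end

lemma agl_formPerm_finRange (n : ℕ) : List.formPerm (List.finRange n) = finRotate n := by
  ext i
  rcases n with _ | m
  · exact i.elim0
  · have h1 : i = (finRange (m+1))[i.val]'(by simp; omega) := by simp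
    conv_lhs => rw [h1]
    rw [List.formPerm_apply_getElem _ (List.nodup_finRange _) _ (by simp; omega)]
    simp [finRotate_succ_apply, Fin.add_def]

lemma agl_t2_chain (n : ℕ) [NeZero n] (hn : 7 ≤ n) (v : ℕ) (h : v < n) :
    finRotate n (finRotate n (formPerm [(0 : Fin n), 1, 3]
      ((finRotate n)⁻¹ ((finRotate n)⁻¹ ⟨v, h⟩)))) =
      ⟨if v = 2 then 3 else if v = 3 then 5 else if v = 5 then 2 else v,
        by split_ifs <;> omega⟩ := by
  simp only [agl_c_apply n hn, agl_cinv_apply n hn, agl_x_apply n hn, Fin.mk.injEq]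
  split_ifs <;> omega

lemma agl_I1 (n : ℕ) [NeZero n] (hn : 7 ≤ n) :
    swap (0 : Fin n) 1 * formPerm [(0 : Fin n), 1, 3] * swap (0 : Fin n) 1 =
      formPerm [(0 : Fin n), 1, 3] * formPerm [(0 : Fin n), 1, 3] := by
  ext z
  obtain ⟨v, h⟩ := z
  simp only [mul_apply, agl_x_apply n hn, agl_tau_apply n hn, Fin.mk.injEq]
  split_ifs <;> omega

lemma agl_I2 (n : ℕ) [NeZero n] (hn : 7 ≤ n) :
    (finRotate n * finRotate n * formPerm [(0 : Fin n), 1, 3] * (finRotate n)⁻¹ * (finRotate n)⁻¹) *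
        (swap (0 : Fin n) 1 * finRotate n * swap (0 : Fin n) 1) =
      (formPerm [(0 : Fin n), 1, 3] *
        (finRotate n * finRotate n * formPerm [(0 : Fin n), 1, 3] * (finRotate n)⁻¹ * (finRotate n)⁻¹)) *
        finRotate n := by
  ext z
  obtain ⟨v, h⟩ := z
  simp only [mul_apply]
  have e1 : swap (0 : Fin n) 1 (finRotate n (swap (0 : Fin n) 1 ⟨v, h⟩)) =
      ⟨if v = 0 then 2 else if v = 1 then 0 else if v + 1 = n then 1 else v + 1,
        by split_ifs <;> omega⟩ := by
    rw [agl_tau_apply n hn, agl_c_apply n hn, agl_tau_apply n hn]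
    simp only [Fin.mk.injEq]
    split_ifs <;> first | omega | exact (‹False›).elim
  rw [e1, agl_t2_chain n hn (if v = 0 then 2 else if v = 1 then 0 else if v + 1 = n then 1 else v + 1)
        (by split_ifs <;> omega)]
  rw [agl_c_apply n hn v h,
    agl_t2_chain n hn (if v + 1 = n then 0 else v + 1) (by split_ifs <;> omega)]
  rw [agl_x_apply n hn
    (if (if v + 1 = n then 0 else v + 1) = 2 then 3
      else if (if v + 1 = n then 0 else v + 1) = 3 then 5
      else if (if v + 1 = n then 0 else v + 1) = 5 then 2
      else if v + 1 = n then 0 else v + 1)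
    (by split_ifs <;> omega)]
  simp only [Fin.mk.injEq]
  split_ifs <;> first | omega | exact (‹False›).elim

section
variable (n : ℕ) [NeZero n] (hn : 7 ≤ n)
include hn

lemma agl_L_length :
    ([(0 : Fin n), 2, 3, 1] ++ (List.finRange n).drop 4).length = n := by
  simp; omega

lemma agl_L_get (i : ℕ) (hi : i < n) :
    ([(0 : Fin n), 2, 3, 1] ++ (List.finRange n).drop 4)[i]'(by rw [agl_L_length n hn]; omega) =
      ⟨if i = 0 then 0 else if i = 1 then 2 else if i = 2 then 3 else if i = 3 then 1 else i,
        by split_ifs <;> omega⟩ := by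
  rcases Nat.lt_or_ge i 4 with h4 | h4
  · interval_cases i <;>
      (ext; simp <;> exact Nat.mod_eq_of_lt (by omega))
  · rw [List.getElem_append_right (by simp; omega : ([(0 : Fin n), 2, 3, 1]).length ≤ i)]
    simp only [List.getElem_drop, List.getElem_finRange]
    ext
    simp only [Fin.val_mk, Fin.coe_cast, List.length_cons, List.length_nil]
    split_ifs <;> omega

lemma agl_L_nodup : ([(0 : Fin n), 2, 3, 1] ++ (List.finRange n).drop 4).Nodup := by
  rw [List.nodup_iff_injective_getElem]
  intro a b hab
  have ha : (a : ℕ) < n := lt_of_lt_of_le a.isLt (agl_L_length n hn).le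
  have hb : (b : ℕ) < n := lt_of_lt_of_le b.isLt (agl_L_length n hn).le
  have h2 : (⟨if a.val = 0 then 0 else if a.val = 1 then 2 else if a.val = 2 then 3
        else if a.val = 3 then 1 else a.val, by split_ifs <;> omega⟩ : Fin n) =
      ⟨if b.val = 0 then 0 else if b.val = 1 then 2 else if b.val = 2 then 3
        else if b.val = 3 then 1 else b.val, by split_ifs <;> omega⟩ := by
    rw [← agl_L_get n hn a.val ha, ← agl_L_get n hn b.val hb]
    exact hab
  rw [Fin.mk.injEq] at h2
  ext
  split_ifs at h2 <;> omega

set_option maxHeartbeats 1000000 in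
lemma agl_P_apply (v : ℕ) (h : v < n) :
    formPerm ([(0 : Fin n), 2, 3, 1] ++ (List.finRange n).drop 4) ⟨v, h⟩ =
      ⟨if v = 0 then 2 else if v = 2 then 3 else if v = 3 then 1 else if v = 1 then 4
        else if v + 1 = n then 0 else v + 1, by split_ifs <;> first | rfl | omega | exact (‹False›).elim⟩ := by
  have hmod0 : ∀ a, a ≤ n → a % n = if a = n then 0 else a := by
    intro a ha
    split_ifs with hh
    · rw [hh, Nat.mod_self]
    · exact Nat.mod_eq_of_lt (by omega)
  have h1 : (⟨v, h⟩ : Fin n) =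
      ([(0 : Fin n), 2, 3, 1] ++ (List.finRange n).drop 4)[(if v = 0 then 0 else if v = 2 then 1 else if v = 3 then 2 else if v = 1 then 3 else v)]'(by
        rw [agl_L_length n hn]; split_ifs <;> first | rfl | omega | exact (‹False›).elim) := by
    rw [agl_L_get n hn (if v = 0 then 0 else if v = 2 then 1 else if v = 3 then 2 else if v = 1 then 3 else v) (by split_ifs <;> first | rfl | omega | exact (‹False›).elim)]
    ext
    simp only [Fin.val_mk]
    split_ifs <;> first | rfl | omega | exact (‹False›).elim
  rw [h1, formPerm_apply_getElem _ (agl_L_nodup n hn) (if v = 0 then 0 else if v = 2 then 1 else if v = 3 then 2 else if v = 1 then 3 else v)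
    (by rw [agl_L_length n hn]; split_ifs <;> first | rfl | omega | exact (‹False›).elim)]
  have hmod : ((if v = 0 then 0 else if v = 2 then 1 else if v = 3 then 2 else if v = 1 then 3 else v) + 1) % ([(0 : Fin n), 2, 3, 1] ++ (List.finRange n).drop 4).length =
      (if v + 1 = n then 0 else (if v = 0 then 0 else if v = 2 then 1 else if v = 3 then 2 else if v = 1 then 3 else v) + 1) := by
    rw [agl_L_length n hn, hmod0 _ (by split_ifs <;> first | rfl | omega | exact (‹False›).elim)]
    split_ifs <;> first | rfl | omega | exact (‹False›).elim
  have h2 : ([(0 : Fin n), 2, 3, 1] ++ (List.finRange n).drop 4)[((if v = 0 then 0 else if v = 2 then 1 else if v = 3 then 2 else if v = 1 then 3 else v) + 1) %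
        ([(0 : Fin n), 2, 3, 1] ++ (List.finRange n).drop 4).length]'(by
          rw [agl_L_length n hn]
          exact Nat.mod_lt _ (by omega)) =
      ([(0 : Fin n), 2, 3, 1] ++ (List.finRange n).drop 4)[(if v + 1 = n then 0 else (if v = 0 then 0 else if v = 2 then 1 else if v = 3 then 2 else if v = 1 then 3 else v) + 1)]'(by
          rw [agl_L_length n hn]; split_ifs <;> first | rfl | omega | exact (‹False›).elim) := by
    exact getElem_congr_idx hmod
  clear h1
  rw [h2]
  clear h2 hmod
  rw [ agl_L_get n hn (if v + 1 = n then 0 else (if v = 0 then 0 else if v = 2 then 1 else if v = 3 then 2 else if v = 1 then 3 else v) + 1) (by split_ifs <;> first | rfl | omega | exact (‹False›).elim)]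
  ext
  simp only [Fin.val_mk]
  split_ifs <;> first | rfl | omega | exact (‹False›).elim

end




/-- for odd `n ≥ 7`, in `A_n` the elements `x₁ = (1,2,4)` and
`y₁ = (1,2,3,…,n)` generate `A_n`, and their product `x₁y₁ = (1,3,4,2,5,…,n)`
is an `n`-cycle.  Points `1,…,n` are modelled by `Fin n` (zero-based), cycles by
`List.formPerm`, and since Mathlib's permutation product applies the right-hand
factor first, the paper's product `x₁y₁` (apply `x₁` first) is `y₁ * x₁`. -/
theorem alternatingGroup_odd_first_pair
    (n : ℕ) [NeZero n] (hn : 7 ≤ n) (hodd : Odd n)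
    (x₁ y₁ : Equiv.Perm (Fin n))
    (hx₁ : x₁ = List.formPerm [(0 : Fin n), 1, 3])
    (hy₁ : y₁ = List.formPerm (List.finRange n)) :
    Subgroup.closure {x₁, y₁} = alternatingGroup (Fin n) ∧
    y₁ * x₁ = List.formPerm ([(0 : Fin n), 2, 3, 1] ++ (List.finRange n).drop 4) ∧
    (y₁ * x₁).IsCycle ∧ (y₁ * x₁).support.card = n := by
  subst hx₁ hy₁
  rw [agl_formPerm_finRange n]
  set x : Perm (Fin n) := formPerm [(0 : Fin n), 1, 3] with hxdef
  set c : Perm (Fin n) := finRotate n with hcdef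
  set τ : Perm (Fin n) := swap (0 : Fin n) 1 with hτdef
  set L : List (Fin n) := [(0 : Fin n), 2, 3, 1] ++ (List.finRange n).drop 4 with hLdef
  have h01 : (0 : Fin n) ≠ 1 := by
    rw [agl_lit0 n hn, agl_lit1 n hn]; simp
  have h13 : (1 : Fin n) ≠ 3 := by
    rw [agl_lit1 n hn, agl_lit3 n hn]; simp
  -- conjunct 2
  have hprod : c * x = formPerm L := by
    ext z
    obtain ⟨v, h⟩ := z
    simp only [mul_apply]
    rw [hxdef, agl_x_apply n hn v h, hcdef,
      agl_c_apply n hn (if v = 0 then 1 else if v = 1 then 3 else if v = 3 then 0 else v)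
        (by split_ifs <;> omega),
      hLdef, agl_P_apply n hn v h]
    simp only [Fin.mk.injEq]
    split_ifs <;> first | rfl | omega | exact (‹False›).elim
  -- conjuncts 3, 4
  have hcyc : (formPerm L).IsCycle :=
    isCycle_formPerm (agl_L_nodup n hn) (by rw [agl_L_length n hn]; omega)
  have hLne : ∀ z : Fin n, L ≠ [z] := by
    intro z hz
    have := congrArg List.length hz
    rw [agl_L_length n hn] at this
    simp at this; omega
  have hsupp : (formPerm L).support.card = n := by
    rw [support_formPerm_of_nodup L (agl_L_nodup n hn) hLne,
      List.toFinset_card_of_nodup (agl_L_nodup n hn), agl_L_length n hn]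
  -- the group-theoretic part
  set G := Subgroup.closure {x, c} with hGdef
  have hxG : x ∈ G := Subgroup.subset_closure (Set.mem_insert _ _)
  have hcG : c ∈ G := Subgroup.subset_closure (Set.mem_insert_of_mem _ rfl)
  have hsx : Perm.sign x = 1 := by
    rw [hxdef, agl_x_eq n, map_mul, sign_swap h01, sign_swap h13]
    norm_num
  have hsc : Perm.sign c = 1 := by
    obtain ⟨m, hm⟩ : ∃ m, n = m + 1 := ⟨n - 1, by omega⟩
    obtain ⟨k, hk⟩ := hodd
    have hek : Even m := ⟨k, by omega⟩
    rw [hcdef]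
    subst hm
    rw [sign_finRotate]
    exact hek.neg_one_pow
  have hsτ : Perm.sign τ = -1 := by rw [hτdef, sign_swap h01]
  have hGA : G ≤ alternatingGroup (Fin n) := by
    rw [hGdef, Subgroup.closure_le]
    rintro g (rfl | rfl)
    · exact hsx
    · exact hsc
  have hττ : τ * τ = 1 := swap_mul_self _ _
  have hτinv : τ⁻¹ = τ := swap_inv _ _
  -- τ-conjugates of the generators lie in G
  have hτxG : τ * x * τ ∈ G := by
    rw [hτdef, hxdef, agl_I1 n hn]
    exact mul_mem hxG hxG
  have hτcG : τ * c * τ ∈ G := by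
    have ht2G : c * c * x * c⁻¹ * c⁻¹ ∈ G :=
      mul_mem (mul_mem (mul_mem (mul_mem hcG hcG) hxG) (inv_mem hcG)) (inv_mem hcG)
    have h5 : τ * c * τ = (c * c * x * c⁻¹ * c⁻¹)⁻¹ *
        ((x * (c * c * x * c⁻¹ * c⁻¹)) * c) := by
      rw [eq_inv_mul_iff_mul_eq, show (c * c * x * c⁻¹ * c⁻¹) * (τ * c * τ) =
        (c * c * x * c⁻¹ * c⁻¹) * (τ * c * τ) from rfl]
      rw [hτdef, hxdef, hcdef]
      exact agl_I2 n hn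
    rw [h5]
    exact mul_mem (inv_mem ht2G) (mul_mem (mul_mem hxG ht2G) hcG)
  have hconj : ∀ g ∈ G, τ * g * τ ∈ G := by
    intro g hg
    rw [hGdef] at hg
    induction hg using Subgroup.closure_induction with
    | mem y hy =>
      rcases hy with rfl | rfl
      · exact hτxG
      · exact hτcG
    | one => rw [mul_one, hττ]; exact one_mem G
    | mul a b ha hb pa pb =>
      have key : (τ * a * τ) * (τ * b * τ) = τ * (a * b) * τ := by
        calc (τ * a * τ) * (τ * b * τ) = τ * a * (τ * τ) * b * τ := by group
        _ = τ * (a * b) * τ := by rw [hττ]; group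
      rw [← key]
      exact mul_mem pa pb
    | inv a ha pa =>
      have key : τ * a⁻¹ * τ = (τ * a * τ)⁻¹ := by
        rw [mul_inv_rev, mul_inv_rev, hτinv, mul_assoc]
      rw [key]
      exact inv_mem pa
  -- every element of ⟨c, τ⟩ is in G or in Gτ
  have hcov : ∀ σ ∈ Subgroup.closure {c, τ}, σ ∈ G ∨ σ * τ ∈ G := by
    intro σ hσ
    induction hσ using Subgroup.closure_induction with
    | mem y hy =>
      rcases hy with rfl | rfl
      · exact Or.inl hcG
      · right; rw [hττ]; exact one_mem G
    | one => exact Or.inl (one_mem G)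
    | mul a b ha hb pa pb =>
      rcases pa with pa | pa <;> rcases pb with pb | pb
      · exact Or.inl (mul_mem pa pb)
      · right; rw [mul_assoc]; exact mul_mem pa pb
      · right
        have key : (a * τ) * (τ * b * τ) = (a * b) * τ := by
          calc (a * τ) * (τ * b * τ) = a * (τ * τ) * b * τ := by group
          _ = (a * b) * τ := by rw [hττ]; group
        rw [← key]
        exact mul_mem pa (hconj b pb)
      · left
        have key : (a * τ) * (τ * (b * τ) * τ) = a * b := by
          calc (a * τ) * (τ * (b * τ) * τ) = a * (τ * τ) * b * (τ * τ) := by group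
          _ = a * b := by rw [hττ]; group
        rw [← key]
        exact mul_mem pa (hconj _ pb)
    | inv a ha pa =>
      rcases pa with pa | pa
      · exact Or.inl (inv_mem pa)
      · right
        have key : τ * (a * τ)⁻¹ * τ = a⁻¹ * τ := by
          rw [mul_inv_rev, hτinv]
          calc τ * (τ * a⁻¹) * τ = (τ * τ) * (a⁻¹ * τ) := by group
          _ = a⁻¹ * τ := by rw [hττ, one_mul]
        rw [← key]
        exact hconj _ (inv_mem pa)
  -- ⟨c, τ⟩ is everything
  have hc0 : c 0 = 1 := by
    rw [hcdef, agl_lit0 n hn, agl_c_apply n hn 0 (by omega), agl_lit1 n hn]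
    ext; simp only [Fin.val_mk]
    split_ifs <;> omega
  have htop : Subgroup.closure {c, τ} = ⊤ := by
    have := closure_cycle_adjacent_swap (isCycle_finRotate_of_le (by omega : 2 ≤ n))
      (support_finRotate_of_le (by omega : 2 ≤ n)) (0 : Fin n)
    rw [hc0] at this
    rw [hτdef, hcdef]
    exact this
  have hAG : alternatingGroup (Fin n) ≤ G := by
    intro σ hσ
    have hσtop : σ ∈ Subgroup.closure {c, τ} := by rw [htop]; exact Subgroup.mem_top σ
    rcases hcov σ hσtop with h | h
    · exact h
    · exfalso
      have h1 : Perm.sign (σ * τ) = 1 := mem_alternatingGroup.mp (hGA h)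
      have h2 : Perm.sign σ = 1 := mem_alternatingGroup.mp hσ
      rw [map_mul, h2, hsτ] at h1
      norm_num at h1
  refine ⟨le_antisymm hGA hAG, hprod, ?_, ?_⟩
  · rw [hprod]; exact hcyc
  · rw [hprod]; exact hsupp
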